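/- Gasper's split poised ${}_{10}\phi_9$ transformation: Let $n \ge 0$ be an integer and let $q, a, b, c, A, B, C$ be nonzero complex numbers such that all factors occurring in denominators below are nonzero. Then $\sum_{k=0}^{n} \frac{1-aq^{2k}}{1-a} \cdot \frac{(a;q)_k (b;q)_k (c;q)_k (a/(bc);q)_k \, (C/(Aq^n);q)_k (1/(BCq^n);q)_k (B/(Aq^n);q)_k (q^{-n};q)_k}{(q;q)_k (aq/b;q)_k (aq/c;q)_k (bcq;q)_k \, (1/(Cq^n);q)_k (BC/(Aq^n);q)_k (1/(Bq^n);q)_k (1/(Aq^n);q)_k} q^k = \frac{(aq,bq,cq,aq/(bc),Aq/B,Aq/C,BCq;q)_n}{(Aq,Bq,Cq,Aq/(BC),aq/b,aq/c,bcq;q)_n} \sum_{k=0}^{n} \frac{1-Aq^{2k}}{1-A} \cdot \frac{(A;q)_k (B;q)_k (C;q)_k (A/(BC);q)_k \, (c/(aq^n);q)_k (1/(bcq^n);q)_k (b/(aq^n);q)_k (q^{-n};q)_k}{(q;q)_k (Aq/B;q)_k (Aq/C;q)_k (BCq;q)_k \, (1/(cq^n);q)_k (bc/(aq^n);q)_k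 (1/(bq^n);q)_k (1/(aq^n);q)_k} q^k$. (The factor $(1-aq^{2k})/(1-a)$ encodes the well-poised parameters $qa^{1/2}, -qa^{1/2}$ over $a^{1/2}, -a^{1/2}$.) -/

import Mathlib

set_option autoImplicit false

/-- The q-shifted factorial `(a;q)_n = ∏_{j=0}^{n-1} (1 - a q^j)`. -/
noncomputable def qPoch (q a : ℂ) (n : ℕ) : ℂ := ∏ j ∈ Finset.range n, (1 - a * q ^ j)


lemma qPoch_zero (q a : ℂ) : qPoch q a 0 = 1 := Finset.prod_range_zero _

lemma qPoch_succ (q a : ℂ) (n : ℕ) : qPoch q a (n+1) = qPoch q a n * (1 - a * q ^ n) :=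
  Finset.prod_range_succ _ _

lemma qPoch_succ' (q a : ℂ) (n : ℕ) : qPoch q a (n+1) = (1 - a) * qPoch q (a*q) n := by
  rw [qPoch, Finset.prod_range_succ']
  simp [qPoch, mul_comm, pow_succ, mul_assoc, mul_left_comm]

lemma qPoch_add (q a : ℂ) (m k : ℕ) :
    qPoch q a (m + k) = qPoch q a m * ∏ j ∈ Finset.range k, (1 - a * q ^ (m + j)) := by
  rw [qPoch, Finset.prod_range_add]; rfl

lemma qPoch_ne_zero_of_le {q a : ℂ} {j k : ℕ} (h : j ≤ k) (hk : qPoch q a k ≠ 0) :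
    qPoch q a j ≠ 0 := by
  obtain ⟨m, rfl⟩ := Nat.exists_eq_add_of_le h
  rw [qPoch_add] at hk
  exact left_ne_zero_of_mul hk

lemma qflip (q x : ℂ) (hq : q ≠ 0) (hx : x ≠ 0) (n : ℕ) :
    ∀ k, k ≤ n → qPoch q (1/(x*q^n)) k * x^k * q^(n*k) * qPoch q (x*q) (n-k)
      = (-1)^k * q^(∑ i ∈ Finset.range k, i) * qPoch q (x*q) n := by
  intro k
  induction k with
  | zero => intro _; simp [qPoch_zero]
  | succ k ih =>
    intro hk1
    obtain ⟨m, rfl⟩ : ∃ m, n = (k+1) + m := ⟨n - (k+1), by omega⟩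
    have ih' := ih (by omega)
    have h1 : k + 1 + m - (k + 1) = m := by omega
    have h2 : k + 1 + m - k = m + 1 := by omega
    rw [h1]
    rw [h2, qPoch_succ] at ih'
    rw [qPoch_succ, Finset.sum_range_succ]
    have key : (1 - 1/(x*q^(k+1+m))*q^k) * (x*q^(k+1+m)) = -q^k * (1 - x*q*q^m) := by
      have hqn : (q:ℂ)^(k+1+m) ≠ 0 := pow_ne_zero _ hq
      field_simp
      ring_nf
    linear_combination (qPoch q (1/(x*q^(k+1+m))) k * x^k * q^((k+1+m)*k) * qPoch q (x*q) m) * key - q^k * ih'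

noncomputable def NN (q A B C : ℂ) (m : ℕ) : ℂ :=
  qPoch q (A*q) m * qPoch q (B*q) m * qPoch q (C*q) m * qPoch q (A*q/(B*C)) m
noncomputable def DD (q A B C : ℂ) (m : ℕ) : ℂ :=
  qPoch q q m * qPoch q (A*q/B) m * qPoch q (A*q/C) m * qPoch q (B*C*q) m
noncomputable def VN (q A B C : ℂ) (n k : ℕ) : ℂ :=
  qPoch q (C/(A*q^n)) k * qPoch q (1/(B*C*q^n)) k * qPoch q (B/(A*q^n)) k *
    qPoch q (q^(-(n:ℤ))) k
noncomputable def VD (q A B C : ℂ) (n k : ℕ) : ℂ :=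
  qPoch q (1/(C*q^n)) k * qPoch q (B*C/(A*q^n)) k * qPoch q (1/(B*q^n)) k *
    qPoch q (1/(A*q^n)) k

lemma cross (q A B C : ℂ) (hq : q ≠ 0) (hA : A ≠ 0) (hB : B ≠ 0) (hC : C ≠ 0)
    (n k : ℕ) (hk : k ≤ n) :
    VN q A B C n k * DD q A B C (n-k) * NN q A B C n
      = VD q A B C n k * NN q A B C (n-k) * DD q A B C n := by
  have E1 := qflip q (A/C) hq (div_ne_zero hA hC) n k hk
  have E2 := qflip q (B*C) hq (mul_ne_zero hB hC) n k hk
  have E3 := qflip q (A/B) hq (div_ne_zero hA hB) n k hk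
  have E4 := qflip q 1 hq one_ne_zero n k hk
  have E5 := qflip q C hq hC n k hk
  have E6 := qflip q (A/(B*C)) hq (div_ne_zero hA (mul_ne_zero hB hC)) n k hk
  have E7 := qflip q B hq hB n k hk
  have E8 := qflip q A hq hA n k hk
  -- fix arguments
  rw [show (1:ℂ)/(A/C*q^n) = C/(A*q^n) by field_simp, show (A/C)*q = A*q/C by ring] at E1
  rw [show (1:ℂ)/(B*C*q^n) = 1/(B*C*q^n) by rfl] at E2
  rw [show (1:ℂ)/(A/B*q^n) = B/(A*q^n) by field_simp, show (A/B)*q = A*q/B by ring] at E3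
  rw [show (1:ℂ)/(1*q^n) = q^(-(n:ℤ)) by rw [zpow_neg, zpow_natCast, one_mul, one_div],
      one_mul, one_pow, mul_one] at E4
  rw [show (1:ℂ)/(A/(B*C)*q^n) = B*C/(A*q^n) by field_simp,
      show (A/(B*C))*q = A*q/(B*C) by ring] at E6
  have HN : (qPoch q (C/(A*q^n)) k * (A/C)^k * q^(n*k) * qPoch q (A*q/C) (n-k)) *
      (qPoch q (1/(B*C*q^n)) k * (B*C)^k * q^(n*k) * qPoch q (B*C*q) (n-k)) *
      (qPoch q (B/(A*q^n)) k * (A/B)^k * q^(n*k) * qPoch q (A*q/B) (n-k)) *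
      (qPoch q (q^(-(n:ℤ))) k * q^(n*k) * qPoch q q (n-k))
      = ((-1)^k * q^(∑ i ∈ Finset.range k, i) * qPoch q (A*q/C) n) *
        ((-1)^k * q^(∑ i ∈ Finset.range k, i) * qPoch q (B*C*q) n) *
        ((-1)^k * q^(∑ i ∈ Finset.range k, i) * qPoch q (A*q/B) n) *
        ((-1)^k * q^(∑ i ∈ Finset.range k, i) * qPoch q q n) := by
    rw [E1, E2, E3, E4]
  have HD : (qPoch q (1/(C*q^n)) k * C^k * q^(n*k) * qPoch q (C*q) (n-k)) *
      (qPoch q (B*C/(A*q^n)) k * (A/(B*C))^k * q^(n*k) * qPoch q (A*q/(B*C)) (n-k)) *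
      (qPoch q (1/(B*q^n)) k * B^k * q^(n*k) * qPoch q (B*q) (n-k)) *
      (qPoch q (1/(A*q^n)) k * A^k * q^(n*k) * qPoch q (A*q) (n-k))
      = ((-1)^k * q^(∑ i ∈ Finset.range k, i) * qPoch q (C*q) n) *
        ((-1)^k * q^(∑ i ∈ Finset.range k, i) * qPoch q (A*q/(B*C)) n) *
        ((-1)^k * q^(∑ i ∈ Finset.range k, i) * qPoch q (B*q) n) *
        ((-1)^k * q^(∑ i ∈ Finset.range k, i) * qPoch q (A*q) n) := by
    rw [E5, E6, E7, E8]
  have hKne : (A/C)^k * (B*C)^k * (A/B)^k * (q^(n*k))^4 ≠ 0 := by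
    apply mul_ne_zero (mul_ne_zero (mul_ne_zero _ _) _) _
    · exact pow_ne_zero _ (div_ne_zero hA hC)
    · exact pow_ne_zero _ (mul_ne_zero hB hC)
    · exact pow_ne_zero _ (div_ne_zero hA hB)
    · exact pow_ne_zero _ (pow_ne_zero _ hq)
  apply mul_right_cancel₀ hKne
  simp only [VN, VD, NN, DD]
  linear_combination (qPoch q (A*q) n * qPoch q (B*q) n * qPoch q (C*q) n *
      qPoch q (A*q/(B*C)) n) * HN -
    (qPoch q q n * qPoch q (A*q/B) n * qPoch q (A*q/C) n * qPoch q (B*C*q) n) * HD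

noncomputable def PP (q a b c : ℂ) (k : ℕ) : ℂ :=
  qPoch q a k * qPoch q b k * qPoch q c k * qPoch q (a/(b*c)) k

lemma DD_ne_zero_of_le {q a b c : ℂ} {j k : ℕ} (h : j ≤ k) (hk : DD q a b c k ≠ 0) :
    DD q a b c j ≠ 0 := by
  simp only [DD] at *
  have h1 := qPoch_ne_zero_of_le h (left_ne_zero_of_mul (left_ne_zero_of_mul (left_ne_zero_of_mul hk)))
  have h2 := qPoch_ne_zero_of_le h (right_ne_zero_of_mul (left_ne_zero_of_mul (left_ne_zero_of_mul hk)))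
  have h3 := qPoch_ne_zero_of_le h (right_ne_zero_of_mul (left_ne_zero_of_mul hk))
  have h4 := qPoch_ne_zero_of_le h (right_ne_zero_of_mul hk)
  exact mul_ne_zero (mul_ne_zero (mul_ne_zero h1 h2) h3) h4

lemma tele (q a b c : ℂ) (hb : b ≠ 0) (hc : c ≠ 0) (j : ℕ) :
    (1 - a*q^(2*(j+1))) * PP q a b c (j+1) * q^(j+1) * DD q a b c j
      = (1-a) * (NN q a b c (j+1) * DD q a b c j - NN q a b c j * DD q a b c (j+1)) := by
  have harg : (a/(b*c))*q = a*q/(b*c) := by ring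
  have scalar : (1 - a*q^(2*(j+1)))*((1-a)*(1-b)*(1-c)*(1-a/(b*c)))*q^(j+1)
      = (1-a)*((1-a*q*q^j)*(1-b*q*q^j)*(1-c*q*q^j)*(1-(a*q/(b*c))*q^j)
        - (1-q*q^j)*(1-(a*q/b)*q^j)*(1-(a*q/c)*q^j)*(1-(b*c*q)*q^j)) := by
    field_simp
    ring
  simp only [PP, NN, DD]
  rw [qPoch_succ' q a, qPoch_succ' q b, qPoch_succ' q c, qPoch_succ' q (a/(b*c)), harg,
    qPoch_succ q (a*q), qPoch_succ q (b*q), qPoch_succ q (c*q), qPoch_succ q (a*q/(b*c)),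
    qPoch_succ q q, qPoch_succ q (a*q/b), qPoch_succ q (a*q/c), qPoch_succ q (b*c*q)]
  linear_combination (qPoch q (a*q) j * qPoch q (b*q) j * qPoch q (c*q) j *
    qPoch q (a*q/(b*c)) j * qPoch q q j * qPoch q (a*q/b) j * qPoch q (a*q/c) j *
    qPoch q (b*c*q) j) * scalar

lemma term_eq (q a b c A B C : ℂ) (hq : q ≠ 0) (ha : a ≠ 0) (hb : b ≠ 0) (hc : c ≠ 0)
    (hA : A ≠ 0) (hB : B ≠ 0) (hC : C ≠ 0) (h1a : 1 - a ≠ 0) (n k : ℕ) (hk : k ≤ n)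
    (hDa : DD q a b c k ≠ 0) (hVD : VD q A B C n k ≠ 0)
    (hDAnk : DD q A B C (n-k) ≠ 0) (hNAn : NN q A B C n ≠ 0) :
    (1 - a*q^(2*k))/(1-a) * (PP q a b c k * VN q A B C n k) * q^k /
        (DD q a b c k * VD q A B C n k)
      = (NN q a b c k / DD q a b c k
          - (if k = 0 then 0 else NN q a b c (k-1) / DD q a b c (k-1)))
        * (NN q A B C (n-k) / DD q A B C (n-k)) * (DD q A B C n / NN q A B C n) := by
  have hVNe : VN q A B C n k ≠ 0 ∨ True := Or.inr trivial
  have hv : VN q A B C n k / VD q A B C n k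
      = NN q A B C (n-k) * DD q A B C n / (DD q A B C (n-k) * NN q A B C n) := by
    rw [div_eq_div_iff hVD (mul_ne_zero hDAnk hNAn)]
    linear_combination cross q A B C hq hA hB hC n k hk
  have hw : (1 - a*q^(2*k))/(1-a) * PP q a b c k * q^k / DD q a b c k
      = NN q a b c k / DD q a b c k
        - (if k = 0 then 0 else NN q a b c (k-1) / DD q a b c (k-1)) := by
    cases k with
    | zero =>
      simp only [if_pos rfl, PP, NN, DD, qPoch_zero]
      rw [mul_one, pow_zero, mul_one]
      field_simp
      simp
    | succ j =>
      have hDj : DD q a b c j ≠ 0 := DD_ne_zero_of_le (Nat.le_succ j) hDa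
      rw [if_neg (Nat.succ_ne_zero j), Nat.add_sub_cancel,
        div_sub_div _ _ hDa hDj,
        div_eq_div_iff hDa (mul_ne_zero hDa hDj), div_mul_eq_mul_div, div_mul_eq_mul_div,
        div_mul_eq_mul_div, div_eq_iff h1a]
      linear_combination DD q a b c (j+1) * tele q a b c hb hc j
  rw [show (1 - a*q^(2*k))/(1-a) * (PP q a b c k * VN q A B C n k) * q^k /
        (DD q a b c k * VD q A B C n k)
      = ((1 - a*q^(2*k))/(1-a) * PP q a b c k * q^k / DD q a b c k) *
        (VN q A B C n k / VD q A B C n k) from by ring,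
    hw, hv]
  ring

noncomputable def gg (q a b c : ℂ) (k : ℕ) : ℂ := NN q a b c k / DD q a b c k

lemma NN_ne (q A B C : ℂ) (hq : q ≠ 0) (hA : A ≠ 0) (hB : B ≠ 0) (hC : C ≠ 0) (n : ℕ)
    (hVD : VD q A B C n n ≠ 0) (hDD : DD q A B C n ≠ 0) : NN q A B C n ≠ 0 := by
  have hcross := cross q A B C hq hA hB hC n n le_rfl
  have h0 : DD q A B C (n-n) = 1 := by simp [DD, qPoch_zero]
  have h1 : NN q A B C (n-n) = 1 := by simp [NN, qPoch_zero]
  rw [h0, h1, mul_one, mul_one] at hcross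
  intro h
  rw [h, mul_zero] at hcross
  exact mul_ne_zero hVD hDD hcross.symm

lemma sumSide (q a b c A B C : ℂ) (hq : q ≠ 0) (ha : a ≠ 0) (hb : b ≠ 0) (hc : c ≠ 0)
    (hA : A ≠ 0) (hB : B ≠ 0) (hC : C ≠ 0) (h1a : 1 - a ≠ 0) (n : ℕ)
    (hL : ∀ k, k ≤ n → DD q a b c k * VD q A B C n k ≠ 0)
    (hR : ∀ k, k ≤ n → DD q A B C k * VD q a b c n k ≠ 0) :
    ∑ k ∈ Finset.range (n+1),
      (1 - a*q^(2*k))/(1-a) * (PP q a b c k * VN q A B C n k) * q^k /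
        (DD q a b c k * VD q A B C n k)
    = (∑ k ∈ Finset.range (n+1), gg q a b c k * gg q A B C (n-k)
        - ∑ k ∈ Finset.range n, gg q a b c k * gg q A B C (n-1-k))
      * (DD q A B C n / NN q A B C n) := by
  have hNAn : NN q A B C n ≠ 0 :=
    NN_ne q A B C hq hA hB hC n (right_ne_zero_of_mul (hL n le_rfl))
      (left_ne_zero_of_mul (hR n le_rfl))
  have step1 : ∀ k ∈ Finset.range (n+1),
      (1 - a*q^(2*k))/(1-a) * (PP q a b c k * VN q A B C n k) * q^k /
        (DD q a b c k * VD q A B C n k)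
      = ((gg q a b c k - (if k = 0 then 0 else gg q a b c (k-1))) * gg q A B C (n-k))
          * (DD q A B C n / NN q A B C n) := by
    intro k hk
    have hk' : k ≤ n := by
      have := Finset.mem_range.mp hk; omega
    have t := term_eq q a b c A B C hq ha hb hc hA hB hC h1a n k hk'
      (left_ne_zero_of_mul (hL k hk')) (right_ne_zero_of_mul (hL k hk'))
      (left_ne_zero_of_mul (hR (n-k) (by omega))) hNAn
    rw [t]
    simp only [gg]
  rw [Finset.sum_congr rfl step1]
  have expand : ∀ k ∈ Finset.range (n+1),
      ((gg q a b c k - (if k = 0 then 0 else gg q a b c (k-1))) * gg q A B C (n-k))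
        * (DD q A B C n / NN q A B C n)
      = gg q a b c k * gg q A B C (n-k) * (DD q A B C n / NN q A B C n)
        - (if k = 0 then 0 else gg q a b c (k-1)) * gg q A B C (n-k)
            * (DD q A B C n / NN q A B C n) := by
    intro k _; ring
  rw [Finset.sum_congr rfl expand, Finset.sum_sub_distrib]
  rw [Finset.sum_range_succ'
    (fun k => (if k = 0 then 0 else gg q a b c (k-1)) * gg q A B C (n-k)
      * (DD q A B C n / NN q A B C n)) n]
  simp only [if_pos rfl, zero_mul, add_zero, Nat.add_sub_cancel]
  have fix : ∀ i ∈ Finset.range n,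
      (if i + 1 = 0 then 0 else gg q a b c i) * gg q A B C (n-(i+1))
        * (DD q A B C n / NN q A B C n)
      = gg q a b c i * gg q A B C (n-1-i) * (DD q A B C n / NN q A B C n) := by
    intro i _
    rw [if_neg (Nat.succ_ne_zero i), show n - (i+1) = n-1-i by omega]
  rw [Finset.sum_congr rfl fix, ← Finset.sum_mul, ← Finset.sum_mul]
  simp only [if_true, zero_mul, add_zero]
  ring

/-- Gasper's split poised ₁₀φ₉ transformation. -/
theorem gasper_split_poised_10phi9 (n : ℕ) (q a b c A B C : ℂ) (hq : q ≠ 0) (ha : a ≠ 0)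
    (hb : b ≠ 0) (hc : c ≠ 0) (hA : A ≠ 0) (hB : B ≠ 0) (hC : C ≠ 0)
    (h1a : 1 - a ≠ 0) (h1A : 1 - A ≠ 0)
    (hdenL : ∀ k ≤ n,
      qPoch q q k * qPoch q (a * q / b) k * qPoch q (a * q / c) k * qPoch q (b * c * q) k *
        qPoch q (1 / (C * q ^ n)) k * qPoch q (B * C / (A * q ^ n)) k *
        qPoch q (1 / (B * q ^ n)) k * qPoch q (1 / (A * q ^ n)) k ≠ 0)
    (hdenR : ∀ k ≤ n,
      qPoch q q k * qPoch q (A * q / B) k * qPoch q (A * q / C) k * qPoch q (B * C * q) k *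
        qPoch q (1 / (c * q ^ n)) k * qPoch q (b * c / (a * q ^ n)) k *
        qPoch q (1 / (b * q ^ n)) k * qPoch q (1 / (a * q ^ n)) k ≠ 0)
    (hpre : qPoch q (A * q) n * qPoch q (B * q) n * qPoch q (C * q) n *
        qPoch q (A * q / (B * C)) n * qPoch q (a * q / b) n * qPoch q (a * q / c) n *
        qPoch q (b * c * q) n ≠ 0) :
    ∑ k ∈ Finset.range (n + 1),
      (1 - a * q ^ (2 * k)) / (1 - a) *
        (qPoch q a k * qPoch q b k * qPoch q c k * qPoch q (a / (b * c)) k *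
          qPoch q (C / (A * q ^ n)) k * qPoch q (1 / (B * C * q ^ n)) k *
          qPoch q (B / (A * q ^ n)) k * qPoch q (q ^ (-(n : ℤ))) k) * q ^ k /
        (qPoch q q k * qPoch q (a * q / b) k * qPoch q (a * q / c) k * qPoch q (b * c * q) k *
          qPoch q (1 / (C * q ^ n)) k * qPoch q (B * C / (A * q ^ n)) k *
          qPoch q (1 / (B * q ^ n)) k * qPoch q (1 / (A * q ^ n)) k)
    = qPoch q (a * q) n * qPoch q (b * q) n * qPoch q (c * q) n * qPoch q (a * q / (b * c)) n *
        qPoch q (A * q / B) n * qPoch q (A * q / C) n * qPoch q (B * C * q) n /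
      (qPoch q (A * q) n * qPoch q (B * q) n * qPoch q (C * q) n *
        qPoch q (A * q / (B * C)) n * qPoch q (a * q / b) n * qPoch q (a * q / c) n *
        qPoch q (b * c * q) n) *
      ∑ k ∈ Finset.range (n + 1),
        (1 - A * q ^ (2 * k)) / (1 - A) *
          (qPoch q A k * qPoch q B k * qPoch q C k * qPoch q (A / (B * C)) k *
            qPoch q (c / (a * q ^ n)) k * qPoch q (1 / (b * c * q ^ n)) k *
            qPoch q (b / (a * q ^ n)) k * qPoch q (q ^ (-(n : ℤ))) k) * q ^ k /
          (qPoch q q k * qPoch q (A * q / B) k * qPoch q (A * q / C) k * qPoch q (B * C * q) k *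
            qPoch q (1 / (c * q ^ n)) k * qPoch q (b * c / (a * q ^ n)) k *
            qPoch q (1 / (b * q ^ n)) k * qPoch q (1 / (a * q ^ n)) k) := by
  have hL : ∀ k, k ≤ n → DD q a b c k * VD q A B C n k ≠ 0 := fun k hk => by
    simpa only [DD, VD, mul_assoc] using hdenL k hk
  have hR : ∀ k, k ≤ n → DD q A B C k * VD q a b c n k ≠ 0 := fun k hk => by
    simpa only [DD, VD, mul_assoc] using hdenR k hk
  have hNNA : NN q A B C n ≠ 0 :=
    NN_ne q A B C hq hA hB hC n (right_ne_zero_of_mul (hL n le_rfl))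
      (left_ne_zero_of_mul (hR n le_rfl))
  have hNNa : NN q a b c n ≠ 0 :=
    NN_ne q a b c hq ha hb hc n (right_ne_zero_of_mul (hR n le_rfl))
      (left_ne_zero_of_mul (hL n le_rfl))
  have matchL : ∀ k ∈ Finset.range (n+1),
      (1 - a * q ^ (2 * k)) / (1 - a) *
        (qPoch q a k * qPoch q b k * qPoch q c k * qPoch q (a / (b * c)) k *
          qPoch q (C / (A * q ^ n)) k * qPoch q (1 / (B * C * q ^ n)) k *
          qPoch q (B / (A * q ^ n)) k * qPoch q (q ^ (-(n : ℤ))) k) * q ^ k /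
        (qPoch q q k * qPoch q (a * q / b) k * qPoch q (a * q / c) k * qPoch q (b * c * q) k *
          qPoch q (1 / (C * q ^ n)) k * qPoch q (B * C / (A * q ^ n)) k *
          qPoch q (1 / (B * q ^ n)) k * qPoch q (1 / (A * q ^ n)) k)
      = (1 - a*q^(2*k))/(1-a) * (PP q a b c k * VN q A B C n k) * q^k /
          (DD q a b c k * VD q A B C n k) := by
    intro k _
    simp only [PP, VN, DD, VD, mul_assoc]
  have matchR : ∀ k ∈ Finset.range (n+1),
      (1 - A * q ^ (2 * k)) / (1 - A) *
        (qPoch q A k * qPoch q B k * qPoch q C k * qPoch q (A / (B * C)) k *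
          qPoch q (c / (a * q ^ n)) k * qPoch q (1 / (b * c * q ^ n)) k *
          qPoch q (b / (a * q ^ n)) k * qPoch q (q ^ (-(n : ℤ))) k) * q ^ k /
        (qPoch q q k * qPoch q (A * q / B) k * qPoch q (A * q / C) k * qPoch q (B * C * q) k *
          qPoch q (1 / (c * q ^ n)) k * qPoch q (b * c / (a * q ^ n)) k *
          qPoch q (1 / (b * q ^ n)) k * qPoch q (1 / (a * q ^ n)) k)
      = (1 - A*q^(2*k))/(1-A) * (PP q A B C k * VN q a b c n k) * q^k /
          (DD q A B C k * VD q a b c n k) := by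
    intro k _
    simp only [PP, VN, DD, VD, mul_assoc]
  rw [Finset.sum_congr rfl matchL, Finset.sum_congr rfl matchR,
    sumSide q a b c A B C hq ha hb hc hA hB hC h1a n hL hR,
    sumSide q A B C a b c hq hA hB hC ha hb hc h1A n hR hL]
  have ref1 : ∑ k ∈ Finset.range (n+1), gg q A B C k * gg q a b c (n-k)
      = ∑ k ∈ Finset.range (n+1), gg q a b c k * gg q A B C (n-k) := by
    rw [← Finset.sum_range_reflect (fun k => gg q a b c k * gg q A B C (n-k)) (n+1)]
    apply Finset.sum_congr rfl
    intro j hj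
    have hj' : j ≤ n := by have := Finset.mem_range.mp hj; omega
    rw [show n+1-1-j = n-j by omega, show n-(n-j) = j by omega, mul_comm]
  have ref2 : ∑ k ∈ Finset.range n, gg q A B C k * gg q a b c (n-1-k)
      = ∑ k ∈ Finset.range n, gg q a b c k * gg q A B C (n-1-k) := by
    rw [← Finset.sum_range_reflect (fun k => gg q a b c k * gg q A B C (n-1-k)) n]
    apply Finset.sum_congr rfl
    intro j hj
    have hj' : j < n := Finset.mem_range.mp hj
    rw [show n-1-(n-1-j) = j by omega, mul_comm]
  rw [ref1, ref2]
  have hqq : qPoch q q n ≠ 0 := by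
    have := left_ne_zero_of_mul (hL n le_rfl)
    simp only [DD] at this
    exact left_ne_zero_of_mul (left_ne_zero_of_mul (left_ne_zero_of_mul this))
  have hDa : DD q a b c n ≠ 0 := left_ne_zero_of_mul (hL n le_rfl)
  have hDA : DD q A B C n ≠ 0 := left_ne_zero_of_mul (hR n le_rfl)
  have hpre_eq : DD q A B C n / NN q A B C n
      = qPoch q (a * q) n * qPoch q (b * q) n * qPoch q (c * q) n *
          qPoch q (a * q / (b * c)) n * qPoch q (A * q / B) n * qPoch q (A * q / C) n *
          qPoch q (B * C * q) n /
        (qPoch q (A * q) n * qPoch q (B * q) n * qPoch q (C * q) n *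
          qPoch q (A * q / (B * C)) n * qPoch q (a * q / b) n * qPoch q (a * q / c) n *
          qPoch q (b * c * q) n) * (DD q a b c n / NN q a b c n) := by
    rw [div_mul_div_comm, div_eq_div_iff hNNA (mul_ne_zero hpre hNNa)]
    simp only [NN, DD]
    ring
  rw [hpre_eq]
  ring
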